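/- For every integer n ≥ 2 there exists a polynomial Q_n with nonnegative integer coefficients in variables y_2, …, y_n, independent of f, such that for every holomorphic function f near z ∈ ℂ with f′(z) ≠ 0, σ_n[f](z) = Q_n(ψ_2[f](z), …, ψ_n[f](z)), where σ_n[f] = S_n[f]/(n+1)!. -/

import Mathlib

/-- The Möbius-normalized function `V(z,w) = N_z(f(z+w))` used by Tamanoi. -/
noncomputable def tamanoiV (f : ℂ → ℂ) (z w : ℂ) : ℂ :=
  deriv f z * (f (z + w) - f z) /
    ((1 / 2) * iteratedDeriv 2 f z * (f (z + w) - f z) + (deriv f z) ^ 2)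

/-- Tamanoi's Schwarzian derivative of virtual order `n`. -/
noncomputable def tamanoiS (f : ℂ → ℂ) (n : ℕ) (z : ℂ) : ℂ :=
  iteratedDeriv (n + 1) (tamanoiV f z) 0

open MvPolynomial Filter Topology

noncomputable def tamQ (n : ℕ) : MvPolynomial ℕ ℤ :=
  ∑ c : Composition n, ∏ i : Fin c.length,
    (if 2 ≤ c.blocksFun i then X (c.blocksFun i) else 0)

lemma coeff_nonneg_aux {P : MvPolynomial ℕ ℤ}
    (hP : P = 0 ∨ ∃ k, P = X k) (d : ℕ →₀ ℕ) : 0 ≤ P.coeff d := by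
  rcases hP with h | ⟨k, h⟩ <;> subst h
  · simp
  · rw [MvPolynomial.coeff_X']
    split <;> norm_num

lemma tamQ_coeff_nonneg (n : ℕ) (d : ℕ →₀ ℕ) : 0 ≤ (tamQ n).coeff d := by
  rw [tamQ, MvPolynomial.coeff_sum]
  refine Finset.sum_nonneg fun c _ => ?_
  -- nonneg coeffs of a product of (X k or 0)
  have key : ∀ (s : Finset (Fin c.length)) (d : ℕ →₀ ℕ),
      0 ≤ (∏ i ∈ s, (if 2 ≤ c.blocksFun i then (X (c.blocksFun i) : MvPolynomial ℕ ℤ) else 0)).coeff d := by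
    intro s
    induction s using Finset.induction with
    | empty => intro d; rw [Finset.prod_empty, MvPolynomial.coeff_one]; split <;> norm_num
    | insert _ _ hx ih =>
      intro d
      rw [Finset.prod_insert hx, MvPolynomial.coeff_mul]
      refine Finset.sum_nonneg fun p _ => mul_nonneg ?_ (ih _)
      refine coeff_nonneg_aux ?_ _
      split
      · exact Or.inr ⟨_, rfl⟩
      · exact Or.inl rfl
  exact key Finset.univ d

lemma tamQ_vars (n : ℕ) : ∀ m ∈ (tamQ n).vars, 2 ≤ m ∧ m ≤ n := by
  intro m hm
  rw [tamQ] at hm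
  have h1 := MvPolynomial.vars_sum_subset
    (Finset.univ : Finset (Composition n))
    (fun c => ∏ i : Fin c.length,
      (if 2 ≤ c.blocksFun i then (X (c.blocksFun i) : MvPolynomial ℕ ℤ) else 0)) hm
  rw [Finset.mem_biUnion] at h1
  obtain ⟨c, _, hc⟩ := h1
  have h2 := MvPolynomial.vars_prod
    (s := (Finset.univ : Finset (Fin c.length)))
    (fun i : Fin c.length =>
      (if 2 ≤ c.blocksFun i then (X (c.blocksFun i) : MvPolynomial ℕ ℤ) else 0)) hc
  rw [Finset.mem_biUnion] at h2
  obtain ⟨i, _, hi⟩ := h2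
  by_cases h : 2 ≤ c.blocksFun i
  · rw [if_pos h, MvPolynomial.vars_X, Finset.mem_singleton] at hi
    subst hi
    exact ⟨h, c.blocksFun_le i⟩
  · rw [if_neg h] at hi
    simp at hi

lemma tamQ_aeval (n : ℕ) (ψ : ℕ → ℂ) :
    MvPolynomial.aeval ψ (tamQ n) =
      ∑ c : Composition n, ∏ i : Fin c.length,
        (if 2 ≤ c.blocksFun i then ψ (c.blocksFun i) else 0) := by
  rw [tamQ, map_sum]
  refine Finset.sum_congr rfl fun c _ => ?_
  rw [map_prod]
  refine Finset.prod_congr rfl fun i _ => ?_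
  split <;> simp

lemma ofScalars_coeff (c : ℕ → ℂ) (n : ℕ) :
    (FormalMultilinearSeries.ofScalars ℂ c).coeff n = c n := by
  simp [FormalMultilinearSeries.coeff, FormalMultilinearSeries.ofScalars, List.prod_ofFn]

lemma comp_ofScalars_coeff (cf : ℕ → ℂ) (n : ℕ) :
    ((formalMultilinearSeries_geometric ℂ ℂ).comp
      (FormalMultilinearSeries.ofScalars ℂ cf)).coeff n =
    ∑ c : Composition n, ∏ i : Fin c.length, cf (c.blocksFun i) := by
  rw [FormalMultilinearSeries.coeff, FormalMultilinearSeries.comp]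
  rw [ContinuousMultilinearMap.sum_apply]
  refine Finset.sum_congr rfl fun c _ => ?_
  rw [FormalMultilinearSeries.compAlongComposition_apply]
  have h1 : (FormalMultilinearSeries.ofScalars ℂ cf).applyComposition c (1 : Fin n → ℂ)
      = fun i => cf (c.blocksFun i) • (1:ℂ) ^ (c.blocksFun i) := by
    funext i
    rw [FormalMultilinearSeries.applyComposition]
    have : ((1 : Fin n → ℂ) ∘ c.embedding i) = fun _ => (1:ℂ) := rfl
    rw [this, FormalMultilinearSeries.ofScalars_apply_eq]
  rw [h1]
  simp [formalMultilinearSeries_geometric, ContinuousMultilinearMap.mkPiAlgebraFin_apply,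
    List.prod_ofFn]

theorem sigma_polynomial_in_psi' (n : ℕ) (hn : 2 ≤ n)
    (f : ℂ → ℂ) (z : ℂ) (hf : AnalyticAt ℂ f z) (hf' : deriv f z ≠ 0)
    (ψ : ℕ → ℂ) (r : ℝ) (hr : 0 < r)
    (hψ : ∀ w : ℂ, w ≠ 0 → ‖w‖ < r →
      HasSum (fun m : ℕ => ψ (m + 1) * w ^ m)
        (1 / w - deriv f z / (f (z + w) - f z))) :
    tamanoiS f n z / ((n + 1).factorial : ℂ) =
      ∑ c : Composition n, ∏ i : Fin c.length,
        (if 2 ≤ c.blocksFun i then ψ (c.blocksFun i) else 0) := by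
  set f' := deriv f z with hf'def
  set f'' := iteratedDeriv 2 f z with hf''def
  set g : ℂ → ℂ := fun w => f (z + w) - f z with hgdef
  -- basic analyticity of g
  have hg_an : AnalyticAt ℂ g 0 := by
    have h1 : AnalyticAt ℂ (fun w : ℂ => f (z + w)) 0 := by
      have h0 : AnalyticAt ℂ f ((fun w : ℂ => z + w) 0) := by simpa using hf
      have := h0.comp (analyticAt_const.add analyticAt_id)
      exact this
    exact h1.sub analyticAt_const
  have hg0 : g 0 = 0 := by simp [hgdef]
  have hgderiv : deriv g 0 = f' := by
    have h1 : deriv g = fun w => deriv f (z + w) := by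
      funext w
      rw [hgdef]
      rw [deriv_sub_const, deriv_comp_const_add]
    rw [h1]
    simp
    rfl
  have hg_ne : ∀ᶠ w in 𝓝[≠] (0:ℂ), g w ≠ 0 := by
    rcases hg_an.eventually_eq_zero_or_eventually_ne_zero with h | h
    · exfalso
      apply hf'
      have : deriv g 0 = deriv (fun _ : ℂ => (0:ℂ)) 0 :=
        Filter.EventuallyEq.deriv_eq h
      rw [hgderiv] at this
      simpa using this
    · exact h
  -- the function φ
  set φ : ℂ → ℂ := fun w => ∑' m : ℕ, ψ (m + 1) * w ^ m with hφdef
  have hφsum : ∀ w : ℂ, ‖w‖ < r → HasSum (fun m : ℕ => ψ (m + 1) * w ^ m) (φ w) := by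
    intro w hw
    have : Summable (fun m : ℕ => ψ (m + 1) * w ^ m) := by
      by_cases hw0 : w = 0
      · subst hw0
        refine (hasSum_single 0 fun m hm => ?_).summable
        simp [zero_pow, hm]
      · exact (hψ w hw0 hw).summable
    exact this.hasSum
  have hφ0 : φ 0 = ψ 1 := by
    have h1 : HasSum (fun m : ℕ => ψ (m + 1) * (0:ℂ) ^ m) (ψ 1) := by
      have := hasSum_single (f := fun m : ℕ => ψ (m + 1) * (0:ℂ) ^ m) 0
        (fun m hm => by simp [zero_pow, hm])
      simpa using this
    rw [hφdef]
    exact h1.tsum_eq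
  have hball : ∀ᶠ w : ℂ in 𝓝 0, ‖w‖ < r := by
    have := Metric.ball_mem_nhds (0:ℂ) hr
    filter_upwards [this] with w hw
    simpa [dist_eq_norm] using hw
  set P := FormalMultilinearSeries.ofScalars ℂ (fun m => ψ (m + 1)) with hPdef
  have hφ_an : HasFPowerSeriesAt φ P 0 := by
    rw [hasFPowerSeriesAt_iff]
    filter_upwards [hball] with w hw
    rw [zero_add]
    have := hφsum w hw
    convert this using 1
    · rfl
    funext m
    rw [ofScalars_coeff]
    simp [mul_comm]
  -- ψ 1 = f'' / (2 f')
  set u : ℂ → ℂ := fun w => 1 - w * φ w with hudef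
  have hu_an : AnalyticAt ℂ u 0 :=
    analyticAt_const.sub (analyticAt_id.mul hφ_an.analyticAt)
  have hu0 : u 0 = 1 := by simp [hudef]
  have key : ∀ᶠ w in 𝓝 (0:ℂ), u w * g w = f' * w := by
    have h1 : ∀ᶠ w in 𝓝[≠] (0:ℂ), u w * g w = f' * w := by
      filter_upwards [hg_ne, self_mem_nhdsWithin,
        eventually_nhdsWithin_of_eventually_nhds hball] with w hgw hw0 hwr
      have hw0' : w ≠ 0 := hw0
      have hval : φ w = 1 / w - f' / g w := (hφsum w hwr).unique (hψ w hw0' hwr)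
      show (1 - w * φ w) * g w = f' * w
      rw [hval]
      field_simp
      ring
    rw [eventually_nhdsWithin_iff] at h1
    filter_upwards [h1] with w hw
    by_cases hw0 : w = 0
    · subst hw0; simp [hu0, hg0]
    · exact hw (by simpa using hw0)
  have hψ1 : 2 * ψ 1 * f' = f'' := by
    -- derivative of u at 0
    have hφdiff : DifferentiableAt ℂ φ 0 := hφ_an.analyticAt.differentiableAt
    have hu' : deriv u 0 = -ψ 1 := by
      rw [hudef]
      rw [deriv_const_sub]
      rw [deriv_fun_mul differentiableAt_fun_id hφdiff]
      simp [hφ0]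
    -- second derivative of g at 0
    have hgd : deriv g = fun w => deriv f (z + w) := by
      funext w
      rw [hgdef]
      rw [deriv_sub_const, deriv_comp_const_add]
    have hg2 : deriv (deriv g) 0 = f'' := by
      rw [hgd]
      rw [deriv_comp_const_add, add_zero, hf''def, iteratedDeriv_succ, iteratedDeriv_one]
    -- analyticity of derivatives
    obtain ⟨U, hU_mem, hU⟩ := hu_an.exists_mem_nhds_analyticOnNhd
    obtain ⟨W, hW_mem, hW⟩ := hg_an.exists_mem_nhds_analyticOnNhd
    have hu'an : AnalyticAt ℂ (deriv u) 0 := hU.deriv 0 (mem_of_mem_nhds hU_mem)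
    have hg'an : AnalyticAt ℂ (deriv g) 0 := hW.deriv 0 (mem_of_mem_nhds hW_mem)
    have hprod : deriv (fun w => u w * g w) =ᶠ[𝓝 (0:ℂ)]
        fun w => deriv u w * g w + u w * deriv g w := by
      filter_upwards [hU_mem, hW_mem] with w hwU hwW
      exact deriv_mul ((hU w hwU).differentiableAt) ((hW w hwW).differentiableAt)
    have hd2 : deriv (deriv (fun w => u w * g w)) 0
        = (deriv (deriv u) 0 * g 0 + deriv u 0 * deriv g 0)
          + (deriv u 0 * deriv g 0 + u 0 * deriv (deriv g) 0) := by
      rw [hprod.deriv_eq]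
      rw [deriv_fun_add (f := fun w => deriv u w * g w) (g := fun w => u w * deriv g w) ((hu'an.differentiableAt).mul hg_an.differentiableAt)
        (hu_an.differentiableAt.mul hg'an.differentiableAt)]
      rw [deriv_fun_mul hu'an.differentiableAt hg_an.differentiableAt]
      rw [deriv_fun_mul hu_an.differentiableAt hg'an.differentiableAt]
    have hR : deriv (deriv (fun w : ℂ => f' * w)) 0 = 0 := by
      have h2 : deriv (fun w : ℂ => f' * w) = fun _ => f' := by
        funext w
        rw [deriv_const_mul_field]
        simp
      rw [h2, deriv_const]
    have keyEq : (fun w => u w * g w) =ᶠ[𝓝 (0:ℂ)] (fun w : ℂ => f' * w) := key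
    have hL : deriv (deriv (fun w => u w * g w)) 0
        = deriv (deriv (fun w : ℂ => f' * w)) 0 :=
      (keyEq.deriv).deriv_eq
    rw [hd2, hR] at hL
    rw [hg0, hu0, hgderiv, hu', hg2] at hL
    -- hL : (_ * 0 + (-ψ 1) * f') + ((-ψ 1) * f' + 1 * f'') = 0
    linear_combination -hL
  -- the function s and its power series
  set cf : ℕ → ℂ := fun k => if 2 ≤ k then ψ k else 0 with hcfdef
  set S := FormalMultilinearSeries.ofScalars ℂ cf with hSdef
  set s : ℂ → ℂ := fun w => w * (φ w - ψ 1) with hsdef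
  have hs0 : s 0 = 0 := by simp [hsdef]
  have hs_series : HasFPowerSeriesAt s S 0 := by
    rw [hasFPowerSeriesAt_iff]
    filter_upwards [hball] with w hw
    rw [zero_add]
    have h1 := hφsum w hw
    have h2 : HasSum (fun m : ℕ => ψ (m + 1 + 1) * w ^ (m + 1)) (φ w - ψ 1) := by
      refine (hasSum_nat_add_iff (f := fun m : ℕ => ψ (m + 1) * w ^ m) 1).2 ?_
      convert h1 using 1
      · rfl
      simp
    have h3 := h2.mul_left w
    have h4 : HasSum (fun m : ℕ => (fun k => w ^ k • S.coeff k) (m + 2)) (s w) := by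
      convert h3 using 1
      · rfl
      funext m
      show w ^ (m + 2) • S.coeff (m + 2) = w * (ψ (m + 1 + 1) * w ^ (m + 1))
      rw [hSdef, ofScalars_coeff]
      show w ^ (m + 2) • (if 2 ≤ m + 2 then ψ (m + 2) else 0) = _
      rw [if_pos (by omega)]
      rw [smul_eq_mul]
      ring
    have h5 := (hasSum_nat_add_iff (f := fun k => w ^ k • S.coeff k) 2).1 h4
    convert h5 using 1
    have hc0 : S.coeff 0 = 0 := by
      rw [hSdef, ofScalars_coeff]; simp [hcfdef]
    have hc1 : S.coeff 1 = 0 := by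
      rw [hSdef, ofScalars_coeff]; simp [hcfdef]
    rw [Finset.sum_range_succ, Finset.sum_range_one, hc0, hc1]
    simp
  -- composition with geometric series
  set G := formalMultilinearSeries_geometric ℂ ℂ with hGdef
  set T := G.comp S with hTdef
  have hinv : HasFPowerSeriesAt (fun x : ℂ => (1 - x)⁻¹) G (s 0) := by
    rw [hs0]
    exact (hasFPowerSeriesOnBall_inv_one_sub ℂ ℂ).hasFPowerSeriesAt
  have hcomp : HasFPowerSeriesAt ((fun x : ℂ => (1 - x)⁻¹) ∘ s) T 0 := hinv.comp hs_series
  -- V equals w * (1 - s w)⁻¹ near 0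
  have hD_ne : ∀ᶠ w in 𝓝 (0:ℂ), (1/2) * f'' * g w + f' ^ 2 ≠ 0 := by
    have hc : ContinuousAt (fun w => (1/2) * f'' * g w + f' ^ 2) 0 :=
      (continuousAt_const.mul hg_an.continuousAt).add continuousAt_const
    have hne : (1/2) * f'' * g 0 + f' ^ 2 ≠ 0 := by
      rw [hg0]
      simpa using pow_ne_zero 2 hf'
    exact hc.eventually_ne hne
  have hg_ne' : ∀ᶠ w in 𝓝 (0:ℂ), w ≠ 0 → g w ≠ 0 := by
    rw [eventually_nhdsWithin_iff] at hg_ne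
    filter_upwards [hg_ne] with w hw hw0
    exact hw (by simpa using hw0)
  have hVeq : ∀ᶠ w : ℂ in 𝓝 0, tamanoiV f z w = w * (1 - s w)⁻¹ := by
    filter_upwards [key, hD_ne, hg_ne'] with w hkey hD hgne
    by_cases hw0 : w = 0
    · subst hw0
      simp [tamanoiV]
    · have hgw : g w ≠ 0 := hgne hw0
      have e1 : (1 - s w) * (f' * g w) = w * ((1/2) * f'' * g w + f' ^ 2) := by
        have hk : (1 - w * φ w) * g w = f' * w := hkey
        show (1 - w * (φ w - ψ 1)) * (f' * g w) = w * ((1/2) * f'' * g w + f' ^ 2)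
        linear_combination f' * hk + (w * g w / 2) * hψ1
      have hden : (1 - s w) ≠ 0 := by
        intro h
        rw [h, zero_mul] at e1
        exact (mul_ne_zero hw0 hD) e1.symm
      show f' * g w / ((1/2) * f'' * g w + f' ^ 2) = w * (1 - s w)⁻¹
      rw [div_eq_iff hD, eq_comm]
      rw [inv_eq_one_div, mul_comm w, div_mul_eq_mul_div, one_mul, div_mul_eq_mul_div,
        div_eq_iff hden]
      linear_combination -e1
  -- power series of V
  set Vser := FormalMultilinearSeries.ofScalars ℂ
    (fun k => if k = 0 then 0 else T.coeff (k - 1)) with hVserdef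
  have hV : HasFPowerSeriesAt (tamanoiV f z) Vser 0 := by
    rw [hasFPowerSeriesAt_iff]
    have hT := hasFPowerSeriesAt_iff.1 hcomp
    filter_upwards [hT, hVeq] with w hw hVw
    rw [zero_add]
    rw [hVw]
    simp only [Function.comp_apply, zero_add] at hw
    have h1 := hw.mul_left w
    have h2 : HasSum (fun k : ℕ => (fun j => w ^ j • Vser.coeff j) (k + 1))
        (w * (1 - s w)⁻¹) := by
      convert h1 using 1
      · rfl
      funext k
      show w ^ (k + 1) • Vser.coeff (k + 1) = w * (w ^ k • T.coeff k)
      rw [hVserdef, ofScalars_coeff]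
      show w ^ (k + 1) • (if k + 1 = 0 then 0 else T.coeff (k + 1 - 1)) = _
      rw [if_neg (Nat.succ_ne_zero k)]
      simp only [Nat.add_sub_cancel, smul_eq_mul]
      ring
    have h3 := (hasSum_nat_add_iff (f := fun j => w ^ j • Vser.coeff j) 1).1 h2
    convert h3 using 1
    have hc0 : Vser.coeff 0 = 0 := by
      rw [hVserdef, ofScalars_coeff, if_pos rfl]
    rw [Finset.sum_range_one, hc0]
    simp
  -- extract coefficient
  have hcoeff : tamanoiS f n z = ((n+1).factorial : ℂ) * T.coeff n := by
    obtain ⟨R, hOB⟩ := hV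
    have hfs := hOB.factorial_smul (1:ℂ) (n + 1)
    rw [tamanoiS, iteratedDeriv_eq_iteratedFDeriv, ← hfs]
    have happ : (Vser (n + 1) fun _ => (1:ℂ)) = Vser.coeff (n + 1) := rfl
    rw [happ]
    have hcv : Vser.coeff (n + 1) = T.coeff n := by
      rw [hVserdef, ofScalars_coeff, if_neg (Nat.succ_ne_zero n)]
      rfl
    rw [hcv, nsmul_eq_mul]
  rw [hcoeff]
  have : ((n+1).factorial : ℂ) ≠ 0 :=
    Nat.cast_ne_zero.mpr (Nat.factorial_ne_zero _)
  rw [mul_comm, mul_div_assoc, div_self this, mul_one]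
  -- T.coeff n equals the composition sum
  rw [hTdef, hSdef, hGdef, comp_ofScalars_coeff cf n]


/-- For every `n ≥ 2` there is a polynomial `Q_n` with nonnegative integer coefficients
in the variables `y_2, …, y_n`, independent of `f`, such that
`σ_n[f](z) = Q_n(ψ_2[f](z), …, ψ_n[f](z))`, where `σ_n[f] = S_n[f]/(n+1)!` and the
Aharonov invariants `ψ_k[f]` are defined by the expansion
`f'(z)/(f(z+w) - f(z)) = 1/w - ∑_{m≥1} ψ_m[f](z) w^{m-1}` for small `w ≠ 0`. -/
theorem sigma_polynomial_in_psi (n : ℕ) (hn : 2 ≤ n) :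
    ∃ Q : MvPolynomial ℕ ℤ,
      (∀ d, 0 ≤ Q.coeff d) ∧
      (∀ m ∈ Q.vars, 2 ≤ m ∧ m ≤ n) ∧
      ∀ (f : ℂ → ℂ) (z : ℂ), AnalyticAt ℂ f z → deriv f z ≠ 0 →
        ∀ (ψ : ℕ → ℂ) (r : ℝ), 0 < r →
          (∀ w : ℂ, w ≠ 0 → ‖w‖ < r →
            HasSum (fun m : ℕ => ψ (m + 1) * w ^ m)
              (1 / w - deriv f z / (f (z + w) - f z))) →
          tamanoiS f n z / ((n + 1).factorial : ℂ) = MvPolynomial.aeval ψ Q := by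
  refine ⟨tamQ n, tamQ_coeff_nonneg n, tamQ_vars n, ?_⟩
  intro f z hf hf' ψ r hr hψ
  rw [tamQ_aeval]
  exact sigma_polynomial_in_psi' n hn f z hf hf' ψ r hr hψ
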